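/- Let 1 ≤ p₁ ≤ p₂ ≤ q < ∞. Then wℓ^{p₂}_q ⊆ wℓ^{p₁}_q, and ‖x‖_{wℓ^{p₁}_q} ≤ ‖x‖_{wℓ^{p₂}_q} for every x ∈ wℓ^{p₂}_q. -/

import Mathlib

open scoped ENNReal NNReal BigOperators

/-- The discrete "ball" `S_{m,N} = {m-N, …, m+N}` as a finite set of integers. -/
noncomputable def S (m : ℤ) (N : ℕ) : Finset ℤ := Finset.Icc (m - N) (m + N)

open Classical in
/-- The cardinality of `{k ∈ S_{m,N} : |x_k| > γ}`. -/
noncomputable def weakCard (x : ℤ → ℂ) (m : ℤ) (N : ℕ) (γ : ℝ≥0) : ℕ :=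
  ((S m N).filter (fun k => γ < ‖x k‖₊)).card

/-- The weak type discrete Morrey norm `‖x‖_{wℓ^p_q}`. -/
noncomputable def wMorreyNorm (p q : ℝ) (x : ℤ → ℂ) : ℝ≥0∞ :=
  ⨆ (m : ℤ) (N : ℕ) (γ : ℝ≥0) (_ : 0 < γ),
    (2 * (N : ℝ≥0∞) + 1) ^ (1 / q - 1 / p) * (γ : ℝ≥0∞) *
      (weakCard x m N γ : ℝ≥0∞) ^ (1 / p)

lemma card_S (m : ℤ) (N : ℕ) : (S m N).card = 2 * N + 1 := by
  simp only [S, Int.card_Icc]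
  omega

lemma weakCard_le (x : ℤ → ℂ) (m : ℤ) (N : ℕ) (γ : ℝ≥0) :
    weakCard x m N γ ≤ 2 * N + 1 := by
  classical
  calc weakCard x m N γ ≤ (S m N).card := Finset.card_filter_le _ _
    _ = 2 * N + 1 := card_S m N

theorem stmt10 (p₁ p₂ q : ℝ) (hp₁ : 1 ≤ p₁) (hp : p₁ ≤ p₂) (hq : p₂ ≤ q) (x : ℤ → ℂ)
    (hx : wMorreyNorm p₂ q x < ⊤) :
    wMorreyNorm p₁ q x ≤ wMorreyNorm p₂ q x := by
  have hp₁pos : (0:ℝ) < p₁ := lt_of_lt_of_le one_pos hp₁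
  have hp₂pos : (0:ℝ) < p₂ := lt_of_lt_of_le hp₁pos hp
  apply iSup_le; intro m; apply iSup_le; intro N; apply iSup_le; intro γ; apply iSup_le; intro hγ
  set c : ℝ≥0∞ := (weakCard x m N γ : ℝ≥0∞) with hc
  set B : ℝ≥0∞ := 2 * (N : ℝ≥0∞) + 1 with hB
  have hB0 : B ≠ 0 := by
    rw [hB]; exact ne_of_gt (lt_of_lt_of_le zero_lt_one le_add_self)
  have hBtop : B ≠ ⊤ := by
    rw [hB]
    exact ENNReal.add_ne_top.mpr
      ⟨ENNReal.mul_ne_top (by simp) (ENNReal.natCast_ne_top N), ENNReal.one_ne_top⟩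
  have hcB : c ≤ B := by
    rw [hc, hB]
    calc (weakCard x m N γ : ℝ≥0∞) ≤ ((2 * N + 1 : ℕ) : ℝ≥0∞) := by
          exact_mod_cast weakCard_le x m N γ
      _ = 2 * (N : ℝ≥0∞) + 1 := by push_cast; ring
  have hexp : (0:ℝ) ≤ 1 / p₁ - 1 / p₂ := by
    have := one_div_le_one_div_of_le hp₁pos hp
    linarith
  have key : B ^ (1 / q - 1 / p₁) * (γ : ℝ≥0∞) * c ^ (1 / p₁) ≤
      B ^ (1 / q - 1 / p₂) * (γ : ℝ≥0∞) * c ^ (1 / p₂) := by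
    rcases eq_or_ne c 0 with h0 | h0
    · rw [h0, ENNReal.zero_rpow_of_pos (by positivity), mul_zero]
      exact zero_le
    · have hctop : c ≠ ⊤ := by simp [hc]
      have e1 : c ^ (1 / p₁) = c ^ (1 / p₂) * c ^ (1 / p₁ - 1 / p₂) := by
        rw [← ENNReal.rpow_add _ _ h0 hctop]; ring_nf
      have e2 : c ^ (1 / p₁ - 1 / p₂) ≤ B ^ (1 / p₁ - 1 / p₂) :=
        ENNReal.rpow_le_rpow hcB hexp
      calc B ^ (1 / q - 1 / p₁) * (γ : ℝ≥0∞) * c ^ (1 / p₁)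
          = B ^ (1 / q - 1 / p₁) * c ^ (1 / p₁ - 1 / p₂) * ((γ : ℝ≥0∞) * c ^ (1 / p₂)) := by
            rw [e1]; ring
        _ ≤ B ^ (1 / q - 1 / p₁) * B ^ (1 / p₁ - 1 / p₂) * ((γ : ℝ≥0∞) * c ^ (1 / p₂)) := by
            gcongr
        _ = B ^ (1 / q - 1 / p₂) * (γ : ℝ≥0∞) * c ^ (1 / p₂) := by
            rw [← ENNReal.rpow_add _ _ hB0 hBtop]; ring_nf
  refine key.trans ?_
  exact le_iSup_of_le m (le_iSup_of_le N (le_iSup_of_le γ (le_iSup_of_le hγ le_rfl)))
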